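/- arXiv:2210.01709 — 11 statements merged into one kernel-verified Lean document; each statement's English description precedes it below -/
import Mathlib

section
/- If Γ ⊆ Fm is consistent and Γ ⊢_¬ α, then there exists γ ∈ Γ such that γ ⊢_¬ α. -/
/-- Formulas of the algebraic language with a single unary connective ¬,
built as the absolutely free algebra over a countably infinite set of variables. -/
inductive Fm : Type where
  | var : ℕ → Fm
  | neg : Fm → Fm

/-- `negn n α` is ¬ⁿα: ¬⁰α = α and ¬ⁿα = ¬(¬ⁿ⁻¹α). -/
def negn : ℕ → Fm → Fm
  | 0, α => α
  | n + 1, α => Fm.neg (negn n α)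

/-- The consequence relation ⊢_¬ of the Hilbert-style calculus with rules
(R1) x, ¬x ⊢ y, (R2) x ⊢ ¬¬x, (R3) ¬¬x ⊢ x: `Deriv Γ α` iff α has a finite
proof from Γ using substitution instances of these rules. -/
inductive Deriv : Set Fm → Fm → Prop where
  | mem {Γ : Set Fm} {α : Fm} : α ∈ Γ → Deriv Γ α
  | r1 {Γ : Set Fm} {α β : Fm} : Deriv Γ α → Deriv Γ (Fm.neg α) → Deriv Γ β
  | r2 {Γ : Set Fm} {α : Fm} : Deriv Γ α → Deriv Γ (Fm.neg (Fm.neg α))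
  | r3 {Γ : Set Fm} {α : Fm} : Deriv Γ (Fm.neg (Fm.neg α)) → Deriv Γ α

/-- If Γ is consistent (some formula is not derivable from Γ) and Γ ⊢_¬ α,
then there is γ ∈ Γ with γ ⊢_¬ α. -/
theorem stmt1 (Γ : Set Fm) (α : Fm) (hcons : ∃ β : Fm, ¬ Deriv Γ β)
    (h : Deriv Γ α) : ∃ γ ∈ Γ, Deriv {γ} α := by
  obtain ⟨β, hβ⟩ := hcons
  induction h with
  | mem hm => exact ⟨_, hm, Deriv.mem rfl⟩
  | r1 h1 h2 _ _ => exact absurd (Deriv.r1 h1 h2) hβ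
  | r2 _ ih => obtain ⟨γ, hγ, hd⟩ := ih; exact ⟨γ, hγ, Deriv.r2 hd⟩
  | r3 _ ih => obtain ⟨γ, hγ, hd⟩ := ih; exact ⟨γ, hγ, Deriv.r3 hd⟩
end

section
/- For all formulas α, β ∈ Fm: α ⊢_¬ β if and only if there exist a variable x ∈ Var and n, k ∈ ℕ₀ such that α = ¬ⁿx, β = ¬ᵏx, and n ≡ k (mod 2). -/
lemma negn_add (a b : ℕ) (γ : Fm) : negn (a + b) γ = negn a (negn b γ) := by
  induction a with
  | zero => simp [negn]
  | succ a ih => simp [negn, ih, Nat.succ_add]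

lemma negn_inj : ∀ {n k x y : ℕ}, negn n (Fm.var x) = negn k (Fm.var y) → n = k ∧ x = y := by
  intro n
  induction n with
  | zero =>
    intro k x y h
    cases k with
    | zero => simp [negn] at h; exact ⟨rfl, h⟩
    | succ k => simp [negn] at h
  | succ n ih =>
    intro k x y h
    cases k with
    | zero => simp [negn] at h
    | succ k =>
      simp only [negn, Fm.neg.injEq] at h
      obtain ⟨h1, h2⟩ := ih h
      exact ⟨by omega, h2⟩

lemma exists_form (β : Fm) : ∃ x m, β = negn m (Fm.var x) := by
  induction β with
  | var x => exact ⟨x, 0, rfl⟩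
  | neg γ ih =>
    obtain ⟨x, m, rfl⟩ := ih
    exact ⟨x, m + 1, rfl⟩

lemma deriv_up (Γ : Set Fm) (γ : Fm) (j : ℕ) (h : Deriv Γ γ) : Deriv Γ (negn (2 * j) γ) := by
  induction j with
  | zero => exact h
  | succ j ih =>
    have : negn (2 * (j + 1)) γ = Fm.neg (Fm.neg (negn (2 * j) γ)) := by
      have : 2 * (j + 1) = (2 * j) + 1 + 1 := by omega
      simp [this, negn]
    rw [this]
    exact Deriv.r2 ih

lemma deriv_down (Γ : Set Fm) (γ : Fm) (j : ℕ) (h : Deriv Γ (negn (2 * j) γ)) : Deriv Γ γ := by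
  induction j with
  | zero => exact h
  | succ j ih =>
    apply ih
    apply Deriv.r3
    have : 2 * (j + 1) = (2 * j) + 1 + 1 := by omega
    rw [this] at h
    simpa [negn] using h

/-- α ⊢_¬ β iff there are a variable x and n, k ∈ ℕ₀ with α = ¬ⁿx, β = ¬ᵏx
and n ≡ k (mod 2). -/
theorem stmt2 (α β : Fm) :
    Deriv {α} β ↔
      ∃ (x n k : ℕ), α = negn n (Fm.var x) ∧ β = negn k (Fm.var x) ∧ n % 2 = k % 2 := by
  obtain ⟨x, n, hα⟩ := exists_form α
  constructor
  · intro h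
    suffices hs : ∃ k, β = negn k (Fm.var x) ∧ n % 2 = k % 2 by
      obtain ⟨k, hk, hp⟩ := hs
      exact ⟨x, n, k, hα, hk, hp⟩
    induction h with
    | mem hm =>
      rw [Set.mem_singleton_iff] at hm
      subst hm
      exact ⟨n, hα, rfl⟩
    | r1 h1 h2 ih1 ih2 =>
      obtain ⟨k1, e1, p1⟩ := ih1
      obtain ⟨k2, e2, p2⟩ := ih2
      exfalso
      rw [e1] at e2
      have : negn (k1 + 1) (Fm.var x) = negn k2 (Fm.var x) := by simp [negn, e2]
      obtain ⟨he, _⟩ := negn_inj this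
      omega
    | r2 h ih =>
      obtain ⟨k, e, p⟩ := ih
      exact ⟨k + 2, by simp [negn, e], by omega⟩
    | r3 h ih =>
      obtain ⟨k, e, p⟩ := ih
      match k, e with
      | 0, e => simp [negn] at e
      | 1, e => simp [negn] at e
      | k + 2, e =>
        simp only [negn, Fm.neg.injEq] at e
        exact ⟨k, e, by omega⟩
  · rintro ⟨y, m, k, rfl, rfl, hp⟩
    have hbase : Deriv {negn m (Fm.var y)} (negn m (Fm.var y)) := Deriv.mem rfl
    rcases le_or_gt m k with hle | hlt
    · obtain ⟨j, hj⟩ : ∃ j, k = 2 * j + m := ⟨(k - m) / 2, by omega⟩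
      rw [hj, negn_add]
      exact deriv_up _ _ _ hbase
    · obtain ⟨j, hj⟩ : ∃ j, m = 2 * j + k := ⟨(m - k) / 2, by omega⟩
      apply deriv_down _ _ j
      rw [← negn_add, ← hj]
      exact hbase
end

section
/- Let α ∈ Fm and let Δ be a theory of ⊢_¬ that is maximal relative to α (i.e., Δ is maximal among the theories not containing α). Then for every formula β ∈ Fm, β ∈ Δ if and only if ¬β ∉ Δ. -/
/-- A theory of ⊢_¬ is a set of formulas closed under derivability. -/
def IsTheory (Δ : Set Fm) : Prop := ∀ β : Fm, Deriv Δ β → β ∈ Δ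

def sz : Fm → ℕ
  | .var _ => 0
  | .neg γ => sz γ + 1

lemma sz_negn (k : ℕ) (γ : Fm) : sz (negn k γ) = k + sz γ := by
  induction k with
  | zero => simp [negn]
  | succ n ih => simp [negn, sz, ih]; omega

lemma negn_inj_var {a b v w : ℕ} (h : negn a (Fm.var v) = negn b (Fm.var w)) : a = b := by
  have := congrArg sz h
  simp [sz_negn, sz] at this
  omega

lemma canon (γ : Fm) : ∃ k v, γ = negn k (Fm.var v) := by
  induction γ with
  | var v => exact ⟨0, v, rfl⟩
  | neg δ ih => obtain ⟨k, v, rfl⟩ := ih; exact ⟨k + 1, v, rfl⟩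

lemma mem_down {Δ : Set Fm} (hth : IsTheory Δ) (x : Fm) :
    ∀ a, negn a x ∈ Δ → negn (a % 2) x ∈ Δ := by
  intro a
  induction a using Nat.strong_induction_on with
  | _ a ih =>
    intro h
    match a with
    | 0 => exact h
    | 1 => exact h
    | (k + 2) =>
      have hk : negn k x ∈ Δ := hth _ (Deriv.r3 (Deriv.mem h))
      have := ih k (by omega) hk
      simpa [Nat.add_mod_right] using this

lemma mem_up {Δ : Set Fm} (hth : IsTheory Δ) (x : Fm) :
    ∀ a, negn (a % 2) x ∈ Δ → negn a x ∈ Δ := by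
  intro a
  induction a using Nat.strong_induction_on with
  | _ a ih =>
    intro h
    match a with
    | 0 => exact h
    | 1 => exact h
    | (k + 2) =>
      have hk : negn k x ∈ Δ := ih k (by omega) (by simpa [Nat.add_mod_right] using h)
      exact hth _ (Deriv.r2 (Deriv.mem hk))

lemma mem_shift {Δ : Set Fm} (hth : IsTheory Δ) {x : Fm} {a b : ℕ}
    (h : negn a x ∈ Δ) (hp : a % 2 = b % 2) : negn b x ∈ Δ := by
  apply mem_up hth x b
  rw [← hp]
  exact mem_down hth x a h

lemma union_theory {Δ : Set Fm} (hth : IsTheory Δ) {v : ℕ}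
    (hno : ∀ m, negn m (Fm.var v) ∉ Δ) (c : ℕ) :
    IsTheory (Δ ∪ {γ | ∃ m, m % 2 = c % 2 ∧ γ = negn m (Fm.var v)}) := by
  intro γ hγ
  induction hγ with
  | mem h => exact h
  | r1 h1 h2 ih1 ih2 =>
    rcases ih1 with h1' | ⟨m, hm, rfl⟩
    · rcases ih2 with h2' | ⟨m, hm, he⟩
      · exact Or.inl (hth _ (Deriv.r1 (Deriv.mem h1') (Deriv.mem h2')))
      · match m, he with
        | (k + 1), he =>
          have : _ = negn k (Fm.var v) := Fm.neg.inj he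
          rw [this] at h1'
          exact absurd h1' (hno k)
    · rcases ih2 with h2' | ⟨m', hm', he⟩
      · exact absurd (show negn (m + 1) (Fm.var v) ∈ Δ from h2') (hno (m + 1))
      · have : negn (m + 1) (Fm.var v) = negn m' (Fm.var v) := he
        have := negn_inj_var this
        omega
  | r2 h ih =>
    rcases ih with h' | ⟨m, hm, rfl⟩
    · exact Or.inl (hth _ (Deriv.r2 (Deriv.mem h')))
    · exact Or.inr ⟨m + 2, by omega, rfl⟩
  | r3 h ih =>
    rcases ih with h' | ⟨m, hm, he⟩
    · exact Or.inl (hth _ (Deriv.r3 (Deriv.mem h')))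
    · match m, he with
      | (k + 2), he =>
        have : _ = negn k (Fm.var v) := Fm.neg.inj (Fm.neg.inj he)
        exact Or.inr ⟨k, by omega, this⟩

/-- If Δ is a theory maximal relative to α (α ∉ Δ and every theory strictly
containing Δ contains α), then for every β: β ∈ Δ iff ¬β ∉ Δ. -/
theorem stmt4 (α : Fm) (Δ : Set Fm) (hth : IsTheory Δ) (hα : α ∉ Δ)
    (hmax : ∀ Δ' : Set Fm, IsTheory Δ' → Δ ⊂ Δ' → α ∈ Δ') :
    ∀ β : Fm, β ∈ Δ ↔ Fm.neg β ∉ Δ := by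
  intro β
  constructor
  · intro hβ hnβ
    exact hα (hth α (Deriv.r1 (Deriv.mem hβ) (Deriv.mem hnβ)))
  · intro hnβ
    by_contra hβ
    obtain ⟨k, v, rfl⟩ := canon β
    have hno : ∀ m, negn m (Fm.var v) ∉ Δ := by
      intro m hm
      by_cases hp : m % 2 = k % 2
      · exact hβ (mem_shift hth hm hp)
      · exact hnβ (show negn (k + 1) (Fm.var v) ∈ Δ from
          mem_shift hth hm (by omega))
    have hT0 := union_theory hth hno k
    have hT1 := union_theory hth hno (k + 1)
    have hs0 : Δ ⊂ Δ ∪ {γ | ∃ m, m % 2 = k % 2 ∧ γ = negn m (Fm.var v)} :=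
      ⟨Set.subset_union_left, fun hsub => hβ (hsub (Or.inr ⟨k, rfl, rfl⟩))⟩
    have hs1 : Δ ⊂ Δ ∪ {γ | ∃ m, m % 2 = (k + 1) % 2 ∧ γ = negn m (Fm.var v)} :=
      ⟨Set.subset_union_left, fun hsub =>
        hnβ (show negn (k + 1) (Fm.var v) ∈ Δ from hsub (Or.inr ⟨k + 1, rfl, rfl⟩))⟩
    have hα0 := hmax _ hT0 hs0
    have hα1 := hmax _ hT1 hs1
    rcases hα0 with h | ⟨a, ha, rfl⟩
    · exact hα h
    rcases hα1 with h | ⟨b, hb, he⟩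
    · exact hα h
    have := negn_inj_var he
    omega
end

section
/- The Hilbert calculus with rules (R1) x, ¬x ⊢ y, (R2) x ⊢ ¬¬x, (R3) ¬¬x ⊢ x axiomatizes the {¬}-fragment of classical propositional logic: for all Γ ∪ {α} ⊆ Fm, Γ ⊢_¬ α if and only if Γ ⊢_N α. -/
/-- The {¬}-fragment ⊢_N of classical propositional logic: Γ ⊢_N α iff every
homomorphism h from Fm to the two-element algebra 2_¬ = ⟨{0,1},¬⟩ (¬0 = 1, ¬1 = 0)
with h[Γ] ⊆ {1} satisfies h(α) = 1. -/
def DerivN (Γ : Set Fm) (α : Fm) : Prop :=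
  ∀ h : Fm → Bool, (∀ φ : Fm, h (Fm.neg φ) = !(h φ)) →
    (∀ γ ∈ Γ, h γ = true) → h α = true

def Fm.depth : Fm → ℕ
  | .var _ => 0
  | .neg φ => φ.depth + 1

def Fm.base : Fm → ℕ
  | .var k => k
  | .neg φ => φ.base

theorem Fm.decomp : ∀ φ : Fm, φ = negn φ.depth (Fm.var φ.base)
  | .var _ => rfl
  | .neg φ => by simp [negn, Fm.depth, Fm.base]; exact φ.decomp

theorem deriv_two {Γ : Set Fm} {φ : Fm} {n : ℕ} :
    Deriv Γ (negn (n + 2) φ) ↔ Deriv Γ (negn n φ) :=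
  ⟨fun h => Deriv.r3 h, fun h => Deriv.r2 h⟩

theorem deriv_mod (Γ : Set Fm) (φ : Fm) :
    ∀ n, Deriv Γ (negn n φ) ↔ Deriv Γ (negn (n % 2) φ)
  | 0 => Iff.rfl
  | 1 => Iff.rfl
  | n + 2 => by
    rw [show (n + 2) % 2 = n % 2 by omega]
    exact deriv_two.trans (deriv_mod Γ φ n)

open Classical in
/-- Countervaluation on variables. -/
noncomputable def hval (Γ : Set Fm) (α : Fm) (x : ℕ) : Bool :=
  if Deriv Γ (Fm.var x) then true
  else if Deriv Γ (Fm.neg (Fm.var x)) then false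
  else decide (α.depth % 2 = 1)

noncomputable def Hval (Γ : Set Fm) (α : Fm) : Fm → Bool
  | .var k => hval Γ α k
  | .neg φ => !(Hval Γ α φ)

theorem Hval_negn (Γ : Set Fm) (α φ : Fm) :
    ∀ n, Hval Γ α (negn n φ) = if n % 2 = 0 then Hval Γ α φ else !(Hval Γ α φ)
  | 0 => by simp [negn]
  | 1 => by simp [negn, Hval]
  | n + 2 => by
    rw [show (n + 2) % 2 = n % 2 by omega]
    have : Hval Γ α (negn (n + 2) φ) = Hval Γ α (negn n φ) := by
      simp [negn, Hval]
    rw [this, Hval_negn Γ α φ n]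

theorem Hval_sound (Γ : Set Fm) (α : Fm)
    (hcon : ∀ ψ : Fm, ¬(Deriv Γ ψ ∧ Deriv Γ (Fm.neg ψ))) :
    ∀ (n : ℕ) (x : ℕ), Deriv Γ (negn n (Fm.var x)) → Hval Γ α (negn n (Fm.var x)) = true
  | 0, x, hd => by
    have hd' : Deriv Γ (Fm.var x) := hd
    simp [negn, Hval, hval, hd']
  | 1, x, hd => by
    have hd' : Deriv Γ (Fm.neg (Fm.var x)) := hd
    have h1 : ¬ Deriv Γ (Fm.var x) := fun h => hcon _ ⟨h, hd'⟩
    simp [negn, Hval, hval, h1, hd']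
  | n + 2, x, hd => by
    have := Hval_sound Γ α hcon n x (Deriv.r3 hd)
    simpa [negn, Hval] using this

theorem Hval_deriv (Γ : Set Fm) (α : Fm)
    (hcon : ∀ ψ : Fm, ¬(Deriv Γ ψ ∧ Deriv Γ (Fm.neg ψ)))
    (φ : Fm) (hd : Deriv Γ φ) : Hval Γ α φ = true := by
  rw [φ.decomp] at hd ⊢
  exact Hval_sound Γ α hcon _ _ hd

theorem Hval_counter (Γ : Set Fm) (α : Fm) (hna : ¬ Deriv Γ α) :
    Hval Γ α α = false := by
  have hd := α.decomp
  have hmod : ¬ Deriv Γ (negn (α.depth % 2) (Fm.var α.base)) := by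
    intro h
    exact hna (by rw [hd]; exact (deriv_mod Γ _ _).mpr h)
  nth_rewrite 2 [hd]
  rw [Hval_negn]
  rcases Nat.even_or_odd α.depth with he | ho
  · have h0 : α.depth % 2 = 0 := Nat.even_iff.mp he
    rw [h0] at hmod ⊢
    simp only [if_pos rfl]
    have h1 : ¬ Deriv Γ (Fm.var α.base) := hmod
    simp [Hval, hval, h1, h0]
  · have h1 : α.depth % 2 = 1 := Nat.odd_iff.mp ho
    rw [h1] at hmod ⊢
    simp only [if_neg one_ne_zero]
    have h2 : ¬ Deriv Γ (Fm.neg (Fm.var α.base)) := hmod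
    by_cases h3 : Deriv Γ (Fm.var α.base) <;> simp [Hval, hval, h2, h3, h1]

/-- The Hilbert calculus (R1)–(R3) axiomatizes the {¬}-fragment of CPL. -/
theorem stmt5 (Γ : Set Fm) (α : Fm) : Deriv Γ α ↔ DerivN Γ α := by
  constructor
  · intro hd h hhom hΓ
    induction hd with
    | mem hm => exact hΓ _ hm
    | r1 _ _ ih1 ih2 => rw [hhom, ih1] at ih2; simp at ih2
    | r2 _ ih => rw [hhom, hhom, ih]; rfl
    | r3 _ ih => rw [hhom, hhom] at ih; simpa using ih
  · intro hDN
    by_contra hna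
    have hcon : ∀ ψ : Fm, ¬(Deriv Γ ψ ∧ Deriv Γ (Fm.neg ψ)) := by
      rintro ψ ⟨h1, h2⟩
      exact hna (Deriv.r1 h1 h2)
    have := hDN (Hval Γ α) (fun φ => rfl) (fun γ hγ => Hval_deriv Γ α hcon γ (Deriv.mem hγ))
    rw [Hval_counter Γ α hna] at this
    exact absurd this (by simp)
end

section
/- Let A be an algebra with a unary operation ¬ and F ⊆ A. Then F is an S_N-filter of A if and only if: (1) for all a ∈ A, if a ∈ F and ¬a ∈ F then F = A; and (2) for all a ∈ A, a ∈ F if and only if ¬¬a ∈ F. -/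
/-- F ⊆ A is an S_N-filter of the algebra ⟨A, neg⟩ if for all Γ ∪ {α} ⊆ Fm with
Γ ⊢_N α and every homomorphism h : Fm → A, h[Γ] ⊆ F implies h(α) ∈ F. -/
def IsSNFilter {A : Type*} (neg : A → A) (F : Set A) : Prop :=
  ∀ (Γ : Set Fm) (α : Fm), DerivN Γ α →
    ∀ h : Fm → A, (∀ φ : Fm, h (Fm.neg φ) = neg (h φ)) →
      (∀ γ ∈ Γ, h γ ∈ F) → h α ∈ F

/-- `Fig neg B` is the least S_N-filter of ⟨A, neg⟩ containing B
(the intersection of all S_N-filters containing B). -/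
def Fig {A : Type*} (neg : A → A) (B : Set A) : Set A :=
  {a | ∀ F : Set A, IsSNFilter neg F → B ⊆ F → a ∈ F}

namespace SNAux

/-- Variable at the core of a formula. -/
def base : Fm → ℕ
  | .var n => n
  | .neg φ => base φ

/-- Number of negations of a formula. -/
def deg : Fm → ℕ
  | .var _ => 0
  | .neg φ => deg φ + 1

/-- The free homomorphism extending g. -/
def homA {A : Type*} (neg : A → A) (g : ℕ → A) : Fm → A
  | .var n => g n
  | .neg φ => neg (homA neg g φ)

lemma homA_spec {A : Type*} (neg : A → A) (g : ℕ → A) :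
    ∀ φ : Fm, homA neg g (Fm.neg φ) = neg (homA neg g φ) := fun _ => rfl

lemma hom_eq {A : Type*} (neg : A → A) (h : Fm → A)
    (hh : ∀ φ, h (Fm.neg φ) = neg (h φ)) (φ : Fm) :
    h φ = neg^[deg φ] (h (Fm.var (base φ))) := by
  induction φ with
  | var n => simp [deg, base]
  | neg ψ ih => rw [hh, ih, deg, base, Function.iterate_succ_apply']

lemma bnot_iter (m : ℕ) (b : Bool) :
    (fun x => !x)^[m] b = if m % 2 = 0 then b else !b := by
  induction m with
  | zero => simp
  | succ n ih =>
    rw [Function.iterate_succ_apply', ih]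
    rcases Nat.even_or_odd n with he | ho
    · have h0 : n % 2 = 0 := Nat.even_iff.mp he
      have h1 : (n + 1) % 2 = 1 := by omega
      simp [h0, h1]
    · have h0 : n % 2 = 1 := Nat.odd_iff.mp ho
      have h1 : (n + 1) % 2 = 0 := by omega
      simp [h0, h1]

lemma parity_mem {A : Type*} (neg : A → A) (F : Set A)
    (h2 : ∀ a, a ∈ F ↔ neg (neg a) ∈ F) :
    ∀ (m : ℕ) (x : A), (neg^[m] x ∈ F ↔ neg^[m % 2] x ∈ F) := by
  intro m
  induction m using Nat.strong_induction_on with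
  | _ m ih =>
    match m with
    | 0 => intro x; simp
    | 1 => intro x; simp
    | (k + 2) =>
      intro x
      have hr : neg^[k + 2] x = neg (neg (neg^[k] x)) := by
        rw [Function.iterate_succ_apply', Function.iterate_succ_apply']
      rw [hr, ← h2, ih k (by omega), Nat.add_mod_right]

end SNAux

open SNAux in
/-- F is an S_N-filter of ⟨A, neg⟩ iff (1) a ∈ F and ¬a ∈ F imply F = A, and
(2) a ∈ F iff ¬¬a ∈ F. -/
theorem stmt7 {A : Type*} (neg : A → A) (F : Set A) :
    IsSNFilter neg F ↔
      ((∀ a : A, a ∈ F → neg a ∈ F → F = Set.univ) ∧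
       (∀ a : A, a ∈ F ↔ neg (neg a) ∈ F)) := by
  constructor
  · intro hF
    constructor
    · intro a ha hna
      ext b
      simp only [Set.mem_univ, iff_true]
      have hder : DerivN {Fm.var 0, Fm.neg (Fm.var 0)} (Fm.var 1) := by
        intro h hh hΓ
        have h1 := hΓ (Fm.var 0) (by simp)
        have h2 := hΓ (Fm.neg (Fm.var 0)) (by simp)
        rw [hh, h1] at h2
        simp at h2
      have := hF _ _ hder (homA neg (fun n => if n = 0 then a else b))
        (homA_spec neg _) ?_
      · simpa [homA] using this
      · rintro γ (rfl | rfl) <;> simp [homA, ha, hna]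
    · intro a
      constructor
      · intro ha
        have hder : DerivN {Fm.var 0} (Fm.neg (Fm.neg (Fm.var 0))) := by
          intro h hh hΓ
          have h1 := hΓ (Fm.var 0) (by simp)
          rw [hh, hh, h1]
          simp
        have := hF _ _ hder (homA neg (fun _ => a)) (homA_spec neg _) ?_
        · simpa [homA] using this
        · rintro γ rfl; simpa [homA] using ha
      · intro ha
        have hder : DerivN {Fm.neg (Fm.neg (Fm.var 0))} (Fm.var 0) := by
          intro h hh hΓ
          have h1 := hΓ (Fm.neg (Fm.neg (Fm.var 0))) (by simp)
          rw [hh, hh] at h1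
          simpa using h1
        have := hF _ _ hder (homA neg (fun _ => a)) (homA_spec neg _) ?_
        · simpa [homA] using this
        · rintro γ rfl; simpa [homA] using ha
  · rintro ⟨h1, h2⟩ Γ α hder h hh hΓ
    classical
    by_cases hc : ∃ β ∈ Γ, ∃ γ ∈ Γ, base β = base γ ∧ deg β % 2 ≠ deg γ % 2
    · -- contradictory premises: F = univ
      obtain ⟨β, hβ, γ, hγ, hbase, hpar⟩ := hc
      set x := h (Fm.var (base β)) with hx
      have hxβ : neg^[deg β % 2] x ∈ F := by
        rw [← parity_mem neg F h2]
        have := hΓ β hβ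
        rwa [hom_eq neg h hh β] at this
      have hxγ : neg^[deg γ % 2] x ∈ F := by
        rw [← parity_mem neg F h2]
        have := hΓ γ hγ
        rwa [hom_eq neg h hh γ, ← hbase] at this
      have hmemx : x ∈ F ∧ neg x ∈ F := by
        have hb2 := Nat.mod_two_eq_zero_or_one (deg β)
        have hg2 := Nat.mod_two_eq_zero_or_one (deg γ)
        rcases hb2 with hb | hb <;> rcases hg2 with hg | hg
        · exact absurd (hb.trans hg.symm) hpar
        · rw [hb] at hxβ; rw [hg] at hxγ
          simpa using And.intro hxβ hxγ
        · rw [hb] at hxβ; rw [hg] at hxγ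
          simpa using And.intro hxγ hxβ
        · exact absurd (hb.trans hg.symm) hpar
      have := h1 x hmemx.1 hmemx.2
      rw [this]
      trivial
    · push_neg at hc
      -- consistent: build a boolean valuation
      set g : ℕ → Bool := fun p =>
        if ((∃ β ∈ Γ, base β = p ∧ deg β % 2 = 1) ∨
            ((∀ β ∈ Γ, base β ≠ p) ∧ deg α % 2 = 0 ∧ p = base α))
        then false else true with hg
      set h0 : Fm → Bool := homA (fun b => !b) g with hh0
      have h0eq : ∀ φ, h0 φ = if deg φ % 2 = 0 then g (base φ) else !(g (base φ)) := by
        intro φ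
        rw [hh0, hom_eq (fun b => !b) (homA (fun b => !b) g) (homA_spec _ _) φ,
          bnot_iter]
        rfl
      have hΓsat : ∀ γ ∈ Γ, h0 γ = true := by
        intro γ hγmem
        rw [h0eq]
        have hgγ : g (base γ) = if ((∃ β ∈ Γ, base β = base γ ∧ deg β % 2 = 1) ∨
            ((∀ β ∈ Γ, base β ≠ base γ) ∧ deg α % 2 = 0 ∧ base γ = base α))
            then false else true := rfl
        rcases Nat.mod_two_eq_zero_or_one (deg γ) with hpar | hpar
        · rw [hpar, if_pos rfl, hgγ, if_neg]
          rintro (⟨β, hβmem, hbeq, hbpar⟩ | ⟨hall, _, _⟩)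
          · have := hc β hβmem γ hγmem hbeq
            omega
          · exact hall γ hγmem rfl
        · rw [hpar, if_neg one_ne_zero, hgγ,
            if_pos (Or.inl ⟨γ, hγmem, rfl, hpar⟩)]
          rfl
      have hα : h0 α = true := hder h0 (homA_spec _ _) hΓsat
      -- extract a witness β ∈ Γ with same base and same parity as α
      have hwit : ∃ β ∈ Γ, base β = base α ∧ deg β % 2 = deg α % 2 := by
        rw [h0eq] at hα
        set P := ((∃ β ∈ Γ, base β = base α ∧ deg β % 2 = 1) ∨
            ((∀ β ∈ Γ, base β ≠ base α) ∧ deg α % 2 = 0 ∧ base α = base α)) with hP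
        have hgα : g (base α) = if P then false else true := rfl
        rcases Nat.mod_two_eq_zero_or_one (deg α) with hpar | hpar
        · rw [hpar, if_pos rfl, hgα] at hα
          have hnP : ¬ P := by
            intro hp
            rw [if_pos hp] at hα
            exact Bool.false_ne_true hα
          rw [hP] at hnP
          push_neg at hnP
          obtain ⟨hnP1, hnP2⟩ := hnP
          by_cases hex : ∃ β ∈ Γ, base β = base α
          · obtain ⟨β, hβmem, hbeq⟩ := hex
            refine ⟨β, hβmem, hbeq, ?_⟩
            have := hnP1 β hβmem hbeq
            omega
          · push_neg at hex
            exact absurd rfl (hnP2 hex hpar)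
        · rw [hpar, if_neg one_ne_zero, hgα] at hα
          have hgP : P := by
            by_contra hnp
            rw [if_neg hnp] at hα
            simp at hα
          rw [hP] at hgP
          rcases hgP with ⟨β, hβmem, hbeq, hbpar⟩ | ⟨_, hpar0, _⟩
          · exact ⟨β, hβmem, hbeq, by omega⟩
          · omega
      obtain ⟨β, hβmem, hbeq, hbpar⟩ := hwit
      have hmem : neg^[deg β] (h (Fm.var (base α))) ∈ F := by
        have := hΓ β hβmem
        rwa [hom_eq neg h hh β, hbeq] at this
      rw [parity_mem neg F h2, hbpar, ← parity_mem neg F h2] at hmem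
      rwa [hom_eq neg h hh α]
end

section
/- Let A be a nontrivial algebra (|A| ≥ 2) with a unary operation ¬ and F ⊆ A. The matrix ⟨A,F⟩ is a reduced model of S_N (i.e., F is an S_N-filter and the Leibniz congruence Ω^A F is the identity) if and only if: (1) ¬¬a = a for all a ∈ A; (2) F = {a₀} for some a₀ ∈ A with a₀ ≠ ¬a₀; and (3) 2 ≤ |A| ≤ 3. -/
namespace Stmt8Aux

/-- the variable of a formula -/
def vOf : Fm → ℕ
  | .var n => n
  | .neg φ => vOf φ

/-- parity of the number of negations -/
def pOf : Fm → Bool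
  | .var _ => false
  | .neg φ => !(pOf φ)

/-- Boolean evaluation from a variable assignment. -/
def beval (v : ℕ → Bool) : Fm → Bool
  | .var n => v n
  | .neg φ => !(beval v φ)

lemma beval_eq (v : ℕ → Bool) (φ : Fm) : beval v φ = xor (pOf φ) (v (vOf φ)) := by
  induction φ with
  | var n => simp [beval, pOf, vOf]
  | neg ψ ih =>
    simp only [beval, pOf, vOf, ih]
    cases pOf ψ <;> cases v (vOf ψ) <;> rfl

/-- algebra evaluation from a variable assignment -/
def aeval {A : Type*} (neg : A → A) (v : ℕ → A) : Fm → A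
  | .var n => v n
  | .neg φ => neg (aeval neg v φ)

lemma aeval_hom {A : Type*} (neg : A → A) (v : ℕ → A) :
    ∀ φ, aeval neg v (Fm.neg φ) = neg (aeval neg v φ) := fun _ => rfl

lemma h_eq {A : Type*} (neg : A → A) (inv : ∀ a, neg (neg a) = a) (h : Fm → A)
    (hh : ∀ φ, h (Fm.neg φ) = neg (h φ)) (φ : Fm) :
    h φ = if pOf φ then neg (h (Fm.var (vOf φ))) else h (Fm.var (vOf φ)) := by
  induction φ with
  | var n => simp [pOf, vOf]
  | neg ψ ih =>
    rw [hh, ih]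
    simp only [pOf, vOf]
    by_cases hp : pOf ψ = true <;> simp [hp, inv]

lemma deriv_dni : DerivN {Fm.var 0} ((Fm.var 0).neg.neg) := by
  intro h hh hg
  rw [hh, hh, Bool.not_not]
  exact hg _ rfl

lemma deriv_dne : DerivN {(Fm.var 0).neg.neg} (Fm.var 0) := by
  intro h hh hg
  have := hg _ rfl
  rw [hh, hh, Bool.not_not] at this
  exact this

lemma deriv_explosion : DerivN {Fm.var 0, (Fm.var 0).neg} (Fm.var 1) := by
  intro h hh hg
  have h1 := hg (Fm.var 0) (by simp)
  have h2 := hg ((Fm.var 0).neg) (by simp)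
  rw [hh, h1] at h2
  simp at h2

lemma iter_parity {A : Type*} (neg : A → A) (inv : ∀ a, neg (neg a) = a) (a : A) :
    ∀ k, neg^[k] a = if k % 2 = 0 then a else neg a := by
  intro k
  induction k with
  | zero => simp
  | succ k ih =>
    rw [Function.iterate_succ_apply', ih]
    rcases Nat.mod_two_eq_zero_or_one k with hk | hk <;>
      simp [hk, Nat.succ_mod_two_eq_one_iff, Nat.succ_mod_two_eq_zero_iff, inv]

end Stmt8Aux

open Stmt8Aux

/-- For a nontrivial algebra ⟨A, neg⟩, the matrix ⟨A, F⟩ is a reduced model of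
S_N (F is an S_N-filter and the Leibniz congruence — the largest congruence
compatible with F, equivalently every congruence compatible with F — is the
identity) iff (1) ¬¬a = a for all a, (2) F = {a₀} with a₀ ≠ ¬a₀, and
(3) 2 ≤ |A| ≤ 3. -/
theorem stmt8 {A : Type*} [Nontrivial A] (neg : A → A) (F : Set A) :
    (IsSNFilter neg F ∧
      ∀ θ : A → A → Prop, Equivalence θ → (∀ a b : A, θ a b → θ (neg a) (neg b)) →
        (∀ a b : A, θ a b → a ∈ F → b ∈ F) → ∀ a b : A, θ a b → a = b) ↔
    ((∀ a : A, neg (neg a) = a) ∧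
     (∃ a₀ : A, F = {a₀} ∧ a₀ ≠ neg a₀) ∧
     (2 ≤ Nat.card A ∧ Nat.card A ≤ 3)) := by
  classical
  constructor
  · rintro ⟨hF, hΩ⟩
    -- key: the Leibniz-style relation is trivial
    have key : ∀ a b : A, (∀ k : ℕ, neg^[k] a ∈ F ↔ neg^[k] b ∈ F) → a = b := by
      intro a b hab
      refine hΩ (fun x y => ∀ k : ℕ, neg^[k] x ∈ F ↔ neg^[k] y ∈ F)
        ⟨fun x k => Iff.rfl, fun hxy k => (hxy k).symm, fun hxy hyz k => (hxy k).trans (hyz k)⟩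
        (fun x y hxy k => by
          rw [← Function.iterate_succ_apply, ← Function.iterate_succ_apply]
          exact hxy (k + 1))
        (fun x y hxy hx => (hxy 0).mp hx) a b hab
    -- closure under double negation, both ways
    have cl1 : ∀ a, a ∈ F → neg (neg a) ∈ F := by
      intro a ha
      have := hF {Fm.var 0} ((Fm.var 0).neg.neg) deriv_dni (aeval neg (fun _ => a))
        (aeval_hom neg _) (by rintro γ rfl; exact ha)
      exact this
    have cl2 : ∀ a, neg (neg a) ∈ F → a ∈ F := by
      intro a ha
      have := hF {(Fm.var 0).neg.neg} (Fm.var 0) deriv_dne (aeval neg (fun _ => a))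
        (aeval_hom neg _) (by rintro γ rfl; exact ha)
      exact this
    have two_step : ∀ a, neg (neg a) ∈ F ↔ a ∈ F := fun a => ⟨cl2 a, cl1 a⟩
    -- involution
    have inv : ∀ a : A, neg (neg a) = a := by
      intro a
      refine key _ _ (fun k => ?_)
      have h1 : neg^[k] (neg (neg a)) = neg (neg (neg^[k] a)) := by
        rw [← Function.iterate_succ_apply, ← Function.iterate_succ_apply,
          Function.iterate_succ_apply', Function.iterate_succ_apply']
      rw [h1, two_step]
    -- F is not everything
    have notAll : F ≠ Set.univ := by
      intro hFA
      obtain ⟨x, y, hxy⟩ := exists_pair_ne A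
      exact hxy (key x y (fun k => by simp [hFA]))
    -- no a with both a and neg a in F
    have notBoth : ∀ a, a ∈ F → neg a ∈ F → False := by
      intro a ha hna
      apply notAll
      ext b
      simp only [Set.mem_univ, iff_true]
      have := hF {Fm.var 0, (Fm.var 0).neg} (Fm.var 1) deriv_explosion
        (aeval neg (fun n => if n = 0 then a else b)) (aeval_hom neg _)
        (by rintro γ (rfl | rfl)
            · simpa [aeval] using ha
            · simpa [aeval] using hna)
      simpa [aeval] using this
    -- F is nonempty
    have hne : F.Nonempty := by
      rcases F.eq_empty_or_nonempty with hFe | h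
      · exfalso
        obtain ⟨x, y, hxy⟩ := exists_pair_ne A
        exact hxy (key x y (fun k => by simp [hFe]))
      · exact h
    obtain ⟨a₀, ha₀⟩ := hne
    have hna₀ : neg a₀ ∉ F := fun h => notBoth a₀ ha₀ h
    -- F = {a₀}
    have hFsingle : F = {a₀} := by
      ext b
      simp only [Set.mem_singleton_iff]
      constructor
      · intro hb
        refine key b a₀ (fun k => ?_)
        rw [iter_parity neg inv, iter_parity neg inv]
        split
        · simp [hb, ha₀]
        · simp only [iff_iff_implies_and_implies]
          exact ⟨fun h => absurd h (fun h => notBoth b hb h),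
                 fun h => absurd h hna₀⟩
      · rintro rfl; exact ha₀
    have hne₀ : a₀ ≠ neg a₀ := fun h => hna₀ (h ▸ ha₀)
    -- membership facts for iterates
    have outside_eq : ∀ b c : A, b ≠ a₀ → b ≠ neg a₀ → c ≠ a₀ → c ≠ neg a₀ → b = c := by
      intro b c hb1 hb2 hc1 hc2
      have hmem : ∀ x : A, x ≠ a₀ → x ≠ neg a₀ → ∀ k, neg^[k] x ∉ F := by
        intro x h1 h2 k
        rw [iter_parity neg inv, hFsingle]
        split
        · simpa using h1
        · simp only [Set.mem_singleton_iff]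
          intro h
          exact h2 (by rw [← h, inv])
      exact key b c (fun k => by simp [hmem b hb1 hb2 k, hmem c hc1 hc2 k])
    -- cardinality
    refine ⟨inv, ⟨a₀, hFsingle, hne₀⟩, ?_⟩
    by_cases hb : ∃ b : A, b ≠ a₀ ∧ b ≠ neg a₀
    · obtain ⟨b, hb1, hb2⟩ := hb
      have hsurj : Function.Surjective (fun i : Fin 3 => if i = 0 then a₀ else if i = 1 then neg a₀ else b) := by
        intro x
        by_cases h1 : x = a₀
        · exact ⟨0, by simp [h1]⟩
        by_cases h2 : x = neg a₀
        · exact ⟨1, by simp [h2]⟩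
        · exact ⟨2, by simpa using outside_eq b x hb1 hb2 h1 h2⟩
      have : Finite A := Finite.of_surjective _ hsurj
      refine ⟨Finite.one_lt_card, ?_⟩
      simpa using Nat.card_le_card_of_surjective _ hsurj
    · push_neg at hb
      have hsurj : Function.Surjective (fun i : Fin 2 => if i = 0 then a₀ else neg a₀) := by
        intro x
        by_cases h1 : x = a₀
        · exact ⟨0, by simp [h1]⟩
        · exact ⟨1, by simp [(hb x h1).symm]⟩
      have : Finite A := Finite.of_surjective _ hsurj
      refine ⟨Finite.one_lt_card, ?_⟩
      have := Nat.card_le_card_of_surjective _ hsurj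
      simp only [Nat.card_eq_fintype_card, Fintype.card_fin] at this
      omega
  · rintro ⟨inv, ⟨a₀, rfl, hne₀⟩, hc2, hc3⟩
    have : Finite A := Nat.finite_of_card_ne_zero (by omega)
    -- at most one element outside {a₀, neg a₀}
    have outside_eq : ∀ b c : A, b ≠ a₀ → b ≠ neg a₀ → c ≠ a₀ → c ≠ neg a₀ → b = c := by
      intro b c hb1 hb2 hc1 hc2
      by_contra hbc
      have hcard : ({a₀, neg a₀, b, c} : Finset A).card = 4 := by
        rw [Finset.card_insert_of_notMem (by simp [hne₀, Ne.symm hb1, Ne.symm hc1]),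
          Finset.card_insert_of_notMem (by simp [Ne.symm hb2, Ne.symm hc2]),
          Finset.card_insert_of_notMem (by simp [hbc]), Finset.card_singleton]
      have hle : ({a₀, neg a₀, b, c} : Finset A).card ≤ Nat.card A := by
        haveI := Fintype.ofFinite A
        rw [Nat.card_eq_fintype_card]
        exact Finset.card_le_univ _
      omega
    constructor
    · -- filter
      intro Γ α hD h hh hg
      simp only [Set.mem_singleton_iff] at hg ⊢
      set v : Bool → ℕ → Bool := fun w n =>
        if h (Fm.var n) = a₀ then true else if h (Fm.var n) = neg a₀ then false else w with hv
      have hmodel : ∀ w, ∀ γ ∈ Γ, beval (v w) γ = true := by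
        intro w γ hγ
        have hγa := hg γ hγ
        rw [h_eq neg inv h hh γ] at hγa
        rw [beval_eq]
        cases hp : pOf γ with
        | true =>
          rw [hp] at hγa
          simp only [if_true] at hγa
          have hx : h (Fm.var (vOf γ)) = neg a₀ := by rw [← hγa, inv]
          simp [hv, hx, Ne.symm hne₀]
        | false =>
          rw [hp] at hγa
          simp only [Bool.false_eq_true, if_false] at hγa
          simp [hv, hγa]
      have hα : ∀ w, beval (v w) α = true := fun w =>
        hD (beval (v w)) (fun _ => rfl) (hmodel w)
      rw [h_eq neg inv h hh α]
      by_cases h1 : h (Fm.var (vOf α)) = a₀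
      · have := hα true
        rw [beval_eq] at this
        simp only [hv, h1, if_true] at this
        have hpα : pOf α = false := by
          cases hp : pOf α
          · rfl
          · rw [hp] at this; simp at this
        simp [hpα, h1]
      · by_cases h2 : h (Fm.var (vOf α)) = neg a₀
        · have := hα true
          rw [beval_eq] at this
          rw [show v true (vOf α) = false by
            simp only [hv]; rw [if_neg h1, if_pos h2]] at this
          have hpα : pOf α = true := by
            cases hp : pOf α
            · rw [hp] at this; simp at this
            · rfl
          simp [hpα, h2, inv]
        · exfalso
          have ht := hα true
          have hf := hα false
          rw [beval_eq] at ht hf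
          rw [show v true (vOf α) = true by
            simp only [hv]; rw [if_neg h1, if_neg h2]] at ht
          rw [show v false (vOf α) = false by
            simp only [hv]; rw [if_neg h1, if_neg h2]] at hf
          cases hp : pOf α <;> rw [hp] at ht hf <;> simp at ht hf
    · -- reduced
      intro θ hEq hCong hComp a b hab
      by_cases ha1 : a = a₀
      · have : b ∈ ({a₀} : Set A) := hComp a b hab (by simp [ha1])
        simp only [Set.mem_singleton_iff] at this
        rw [ha1, this]
      · by_cases ha2 : a = neg a₀
        · have hnb : neg b ∈ ({a₀} : Set A) := by
            refine hComp (neg a) (neg b) (hCong a b hab) ?_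
            simp [ha2, inv]
          simp only [Set.mem_singleton_iff] at hnb
          have : b = neg a₀ := by rw [← hnb, inv]
          rw [ha2, this]
        · by_cases hb1 : b = a₀
          · have : a ∈ ({a₀} : Set A) := hComp b a (hEq.symm hab) (by simp [hb1])
            simp only [Set.mem_singleton_iff] at this
            exact absurd this ha1
          · by_cases hb2 : b = neg a₀
            · have hna : neg a ∈ ({a₀} : Set A) := by
                refine hComp (neg b) (neg a) (hCong b a (hEq.symm hab)) ?_
                simp [hb2, inv]
              simp only [Set.mem_singleton_iff] at hna
              exact absurd (by rw [← hna, inv]) ha2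
            · exact outside_eq a b ha1 ha2 hb1 hb2
end

section
/- Let A be an algebra with a unary operation ¬ and b ∈ A such that ¬ˢb ≠ ¬ᵗb for every even s and odd t. Then: (1) Fig({b}) = {a ∈ A : ∃ even s, t with ¬ˢa = ¬ᵗb}; (B4) if a ∈ Fig({b}) then b ∈ Fig({a}); (B5) if a ∈ Fig({b}) then ¬b ∈ Fig({¬a}). -/
namespace Stmt13Aux

/-- degree (number of negations) -/
def deg : Fm → ℕ
  | .var _ => 0
  | .neg φ => deg φ + 1

/-- head variable -/
def vr : Fm → ℕ
  | .var n => n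
  | .neg φ => vr φ

lemma eq_iter : ∀ φ : Fm, φ = Fm.neg^[deg φ] (Fm.var (vr φ)) := by
  intro φ
  induction φ with
  | var n => rfl
  | neg ψ ih =>
    show Fm.neg ψ = Fm.neg^[deg ψ + 1] (Fm.var (vr ψ))
    rw [Function.iterate_succ_apply', ← ih]

lemma hom_iter {A : Type*} (g : A → A) (h : Fm → A)
    (hh : ∀ φ, h (Fm.neg φ) = g (h φ)) :
    ∀ (k : ℕ) (φ : Fm), h (Fm.neg^[k] φ) = g^[k] (h φ) := by
  intro k
  induction k with
  | zero => intro φ; simp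
  | succ n ih =>
    intro φ
    rw [Function.iterate_succ_apply, ih, hh]
    exact (Function.iterate_succ_apply g n (h φ)).symm

lemma not_iter_even {k : ℕ} (hk : Even k) (x : Bool) :
    (fun b => !b)^[k] x = x := by
  obtain ⟨m, hm⟩ := hk
  subst hm
  induction m with
  | zero => simp
  | succ n ih =>
    have : n + 1 + (n + 1) = (n + n) + 2 := by ring
    rw [this, Function.iterate_add_apply]
    simpa using ih

lemma not_iter_odd {k : ℕ} (hk : Odd k) (x : Bool) :
    (fun b => !b)^[k] x = !x := by
  obtain ⟨m, hm⟩ := hk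
  subst hm
  rw [show 2 * m + 1 = (2 * m) + 1 from rfl, Function.iterate_add_apply,
    not_iter_even (even_two_mul m)]
  rfl

/-- the canonical homomorphism sending every variable to x -/
def hmap {A : Type*} (neg : A → A) (x : A) : Fm → A
  | .var _ => x
  | .neg φ => neg (hmap neg x φ)

lemma deriv_up {t : ℕ} (ht : Even t) :
    DerivN {Fm.var 0} (Fm.neg^[t] (Fm.var 0)) := by
  intro h hh hΓ
  rw [hom_iter (fun b => !b) h hh, not_iter_even ht]
  exact hΓ _ rfl

lemma deriv_strip {s : ℕ} (hs : Even s) :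
    DerivN {Fm.neg^[s] (Fm.var 0)} (Fm.var 0) := by
  intro h hh hΓ
  have := hΓ _ rfl
  rwa [hom_iter (fun b => !b) h hh, not_iter_even hs] at this

lemma filter_up {A : Type*} {neg : A → A} {F : Set A} (hF : IsSNFilter neg F)
    {x : A} (hx : x ∈ F) {t : ℕ} (ht : Even t) : neg^[t] x ∈ F := by
  have := hF {Fm.var 0} (Fm.neg^[t] (Fm.var 0)) (deriv_up ht)
    (hmap neg x) (fun _ => rfl) (by rintro γ rfl; exact hx)
  rw [hom_iter neg (hmap neg x) (fun _ => rfl)] at this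
  exact this

lemma filter_strip {A : Type*} {neg : A → A} {F : Set A} (hF : IsSNFilter neg F)
    {x : A} {s : ℕ} (hs : Even s) (hx : neg^[s] x ∈ F) : x ∈ F := by
  have := hF {Fm.neg^[s] (Fm.var 0)} (Fm.var 0) (deriv_strip hs)
    (hmap neg x) (fun _ => rfl)
    (by rintro γ rfl
        rw [hom_iter neg (hmap neg x) (fun _ => rfl)]
        exact hx)
  exact this

/-- valuation determined by variable assignment f -/
def vmap (f : ℕ → Bool) : Fm → Bool
  | .var n => f n
  | .neg φ => !(vmap f φ)

end Stmt13Aux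

open Stmt13Aux
/-- If ¬ˢb ≠ ¬ᵗb for every even s and odd t, then
(1) Fig({b}) = {a : ∃ even s, t with ¬ˢa = ¬ᵗb};
(B4) a ∈ Fig({b}) implies b ∈ Fig({a});
(B5) a ∈ Fig({b}) implies ¬b ∈ Fig({¬a}). -/
theorem stmt13 {A : Type*} (neg : A → A) (b : A)
    (hb : ∀ s t : ℕ, Even s → Odd t → neg^[s] b ≠ neg^[t] b) :
    Fig neg {b} = {a : A | ∃ s t : ℕ, Even s ∧ Even t ∧ neg^[s] a = neg^[t] b} ∧
    (∀ a : A, a ∈ Fig neg {b} → b ∈ Fig neg {a}) ∧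
    (∀ a : A, a ∈ Fig neg {b} → neg b ∈ Fig neg {neg a}) := by
  classical
  set S : Set A := {a | ∃ s t : ℕ, Even s ∧ Even t ∧ neg^[s] a = neg^[t] b} with hS
  have up : ∀ {x : A} {k : ℕ}, Even k → x ∈ S → neg^[k] x ∈ S := by
    rintro x k hk ⟨s, t, hs, ht, he⟩
    refine ⟨s, k + t, hs, hk.add ht, ?_⟩
    rw [← Function.iterate_add_apply, add_comm s k, Function.iterate_add_apply, he,
      ← Function.iterate_add_apply]
  have strip : ∀ {x : A} {k : ℕ}, Even k → neg^[k] x ∈ S → x ∈ S := by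
    rintro x k hk ⟨s, t, hs, ht, he⟩
    exact ⟨s + k, t, hs.add hk, ht, by rwa [Function.iterate_add_apply]⟩
  have disj : ∀ {x : A}, x ∈ S → neg x ∈ S → False := by
    rintro x ⟨s, t, hs, ht, he⟩ ⟨s', t', hs', ht', he'⟩
    have h1 : neg^[s' + 1 + s] x = neg^[s' + 1 + t] b := by
      rw [Function.iterate_add_apply, he, ← Function.iterate_add_apply]
    have h2 : neg^[s + s'] (neg x) = neg^[s + t'] b := by
      rw [Function.iterate_add_apply, he', ← Function.iterate_add_apply]
    have h3 : neg^[s + s' + 1] x = neg^[s + s'] (neg x) :=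
      Function.iterate_succ_apply neg (s + s') x
    have h4 : s' + 1 + s = s + s' + 1 := by omega
    rw [h4, h3, h2] at h1
    exact hb (s + t') (s' + 1 + t) (hs.add ht') (by
      rcases hs' with ⟨u, hu⟩; rcases ht with ⟨w, hw⟩; exact ⟨u + w, by omega⟩) h1
  have oddcase : ∀ {x : A} {k : ℕ}, Odd k → neg^[k] x ∈ S → neg x ∈ S := by
    rintro x k ⟨u, hu⟩ hx
    rw [hu, Function.iterate_add_apply] at hx
    exact strip (even_two_mul u) hx
  have oddup : ∀ {x : A} {k : ℕ}, Odd k → neg x ∈ S → neg^[k] x ∈ S := by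
    rintro x k ⟨u, hu⟩ hx
    rw [hu, Function.iterate_add_apply]
    exact up (even_two_mul u) hx
  have hbS : b ∈ S := ⟨0, 0, Even.zero, Even.zero, rfl⟩
  have hFil : IsSNFilter neg S := by
    intro Γ α hD h hh hΓ
    by_contra hnot
    obtain ⟨k, m, hα⟩ : ∃ k m, α = Fm.neg^[k] (Fm.var m) := ⟨_, _, eq_iter α⟩
    set f : ℕ → Bool :=
      fun n' => if n' = m then decide (Odd k) else decide (h (Fm.var n') ∈ S) with hf
    have hvα : vmap f α = false := by
      rw [hα, hom_iter (fun b => !b) (vmap f) (fun _ => rfl)]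
      have hfm : vmap f (Fm.var m) = decide (Odd k) := by simp [vmap, hf]
      rw [hfm]
      rcases Nat.even_or_odd k with hk | hk
      · rw [not_iter_even hk]; simp [Nat.not_odd_iff_even.mpr hk]
      · rw [not_iter_odd hk]; simp [hk]
    refine absurd (hD (vmap f) (fun _ => rfl) ?_) (by simp [hvα])
    intro γ hγ
    obtain ⟨j, n, hγeq⟩ : ∃ j n, γ = Fm.neg^[j] (Fm.var n) := ⟨_, _, eq_iter γ⟩
    have hγS : neg^[j] (h (Fm.var n)) ∈ S := by
      have := hΓ γ hγ
      rwa [hγeq, hom_iter neg h hh] at this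
    rw [hγeq, hom_iter (fun b => !b) (vmap f) (fun _ => rfl)]
    have hfn : vmap f (Fm.var n) = f n := rfl
    rw [hfn]
    by_cases hnm : n = m
    · subst hnm
      have hαS : neg^[k] (h (Fm.var n)) ∉ S := by
        rw [hα, hom_iter neg h hh] at hnot; exact hnot
      rcases Nat.even_or_odd j with hj | hj
      · have hxS := strip hj hγS
        have hkodd : Odd k := by
          rcases Nat.even_or_odd k with hk | hk
          · exact absurd (up hk hxS) hαS
          · exact hk
        rw [not_iter_even hj]
        simp [hf, hkodd]
      · have hnxS := oddcase hj hγS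
        have hkeven : ¬ Odd k := by
          rcases Nat.even_or_odd k with hk | hk
          · exact Nat.not_odd_iff_even.mpr hk
          · exact absurd (oddup hk hnxS) hαS
        rw [not_iter_odd hj]
        simp [hf, hkeven]
    · rcases Nat.even_or_odd j with hj | hj
      · rw [not_iter_even hj]; simp [hf, hnm, strip hj hγS]
      · rw [not_iter_odd hj]
        have hxn : h (Fm.var n) ∉ S := fun hx => disj hx (oddcase hj hγS)
        simp [hf, hnm, hxn]
  have hFigS : Fig neg {b} = S := by
    apply Set.Subset.antisymm
    · intro a ha
      exact ha S hFil (by simpa using hbS)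
    · rintro a ⟨s, t, hs, ht, he⟩ F hF hbF
      have := filter_up hF (hbF rfl) ht
      rw [← he] at this
      exact filter_strip hF hs this
  refine ⟨hFigS, ?_, ?_⟩
  · intro a ha F hF haF
    rw [hFigS] at ha
    obtain ⟨s, t, hs, ht, he⟩ := ha
    have := filter_up hF (haF rfl) hs
    rw [he] at this
    exact filter_strip hF ht this
  · intro a ha F hF haF
    rw [hFigS] at ha
    obtain ⟨s, t, hs, ht, he⟩ := ha
    have h1 : neg^[s] (neg a) = neg^[t] (neg b) := by
      rw [← Function.iterate_succ_apply, ← Function.iterate_succ_apply,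
        Function.iterate_succ_apply', Function.iterate_succ_apply', he]
    have := filter_up hF (haF rfl) hs
    rw [h1] at this
    exact filter_strip hF ht this
end

section
/- Let A be an algebra with a unary operation ¬ and B ⊆ A. If a ∈ Fig(B) and Fig(B) ≠ A, then there exists b ∈ B such that a ∈ Fig({b}). -/
namespace StmtAux

/-- Base variable of a formula. -/
def base : Fm → ℕ
  | Fm.var n => n
  | Fm.neg φ => base φ

/-- Parity of the number of negations. -/
def par : Fm → Bool
  | Fm.var _ => false
  | Fm.neg φ => !(par φ)

lemma hom_eq_bool (h : Fm → Bool) (hh : ∀ φ, h (Fm.neg φ) = !(h φ)) :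
    ∀ φ, h φ = xor (h (Fm.var (base φ))) (par φ) := by
  intro φ
  induction φ with
  | var n => simp [base, par]
  | neg ψ ih =>
      show h (Fm.neg ψ) = xor (h (Fm.var (base ψ))) (!(par ψ))
      rw [hh, ih]
      cases h (Fm.var (base ψ)) <;> cases par ψ <;> rfl

lemma hom_agree {A : Type*} (neg : A → A) (h h' : Fm → A)
    (hh : ∀ φ, h (Fm.neg φ) = neg (h φ)) (hh' : ∀ φ, h' (Fm.neg φ) = neg (h' φ)) :
    ∀ φ : Fm, h (Fm.var (base φ)) = h' (Fm.var (base φ)) → h φ = h' φ := by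
  intro φ
  induction φ with
  | var n => exact fun e => e
  | neg ψ ih => intro e; rw [hh, hh', ih e]

/-- Evaluation of formulas in A given values of variables. -/
def evA {A : Type*} (neg : A → A) (v : ℕ → A) : Fm → A
  | Fm.var n => v n
  | Fm.neg φ => neg (evA neg v φ)

lemma deriv_char {Γ : Set Fm} {α : Fm} (hd : DerivN Γ α) :
    (∃ γ ∈ Γ, ∃ δ ∈ Γ, base γ = base δ ∧ par γ ≠ par δ) ∨
    (∃ γ ∈ Γ, base γ = base α ∧ par γ = par α) := by
  classical
  by_contra hc
  push_neg at hc
  obtain ⟨h1, h2⟩ := hc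
  set v : ℕ → Bool := fun n =>
    if n = base α ∧ ¬ ∃ γ ∈ Γ, base γ = n then par α
    else decide (∃ γ ∈ Γ, base γ = n ∧ par γ = false) with hv
  set h : Fm → Bool := fun φ => xor (v (base φ)) (par φ) with hdef
  have hh : ∀ φ, h (Fm.neg φ) = !(h φ) := by
    intro φ
    show xor (v (base φ)) (!(par φ)) = !(xor (v (base φ)) (par φ))
    cases v (base φ) <;> cases par φ <;> rfl
  have hsat : ∀ γ ∈ Γ, h γ = true := by
    intro γ hγ
    have hvγ : v (base γ) = !(par γ) := by
      simp only [hv]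
      rw [if_neg (fun hc => hc.2 ⟨γ, hγ, rfl⟩)]
      cases hpγ : par γ with
      | false => simp only [Bool.not_false, decide_eq_true_eq]; exact ⟨γ, hγ, rfl, hpγ⟩
      | true =>
          simp only [Bool.not_true, decide_eq_false_iff_not]
          rintro ⟨δ, hδ, hbδ, hpδ⟩
          have := h1 γ hγ δ hδ hbδ.symm
          rw [hpγ, hpδ] at this
          exact Bool.noConfusion this
    show xor (v (base γ)) (par γ) = true
    rw [hvγ]; cases par γ <;> rfl
  have hα := hd h hh hsat
  have hvα : v (base α) = par α := by
    by_cases hex : ∃ γ ∈ Γ, base γ = base α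
    · have hv1 : v (base α) = decide (∃ γ ∈ Γ, base γ = base α ∧ par γ = false) := by
        simp only [hv]; exact if_neg (fun hc => hc.2 hex)
      rw [hv1]
      obtain ⟨γ, hγ, hbγ⟩ := hex
      have hpγ := h2 γ hγ hbγ
      cases hpα : par α with
      | false =>
          simp only [decide_eq_false_iff_not]
          rintro ⟨δ, hδ, hbδ, hpδ⟩
          exact h2 δ hδ hbδ (by rw [hpδ, hpα])
      | true =>
          simp only [decide_eq_true_eq]
          refine ⟨γ, hγ, hbγ, ?_⟩
          rw [hpα] at hpγ
          cases hq : par γ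
          · rfl
          · exact absurd hq hpγ
    · simp [hv, hex]
  have : h α = false := by
    show xor (v (base α)) (par α) = false
    rw [hvα]; cases par α <;> rfl
  rw [hα] at this; exact Bool.noConfusion this

lemma deriv_single {γ α : Fm} (hb : base γ = base α) (hp : par γ = par α) :
    DerivN {γ} α := by
  intro h hh hs
  have e := hom_eq_bool h hh
  have hg := hs γ (by simp)
  rw [e γ, hb, hp] at hg
  rw [e α]; exact hg

lemma deriv_clash {γ δ : Fm} (hb : base γ = base δ) (hp : par γ ≠ par δ) (α : Fm) :
    DerivN {γ, δ} α := by
  intro h hh hs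
  have e := hom_eq_bool h hh
  have hg := hs γ (by simp); have hd := hs δ (by simp)
  rw [e γ, hb] at hg; rw [e δ] at hd
  exfalso
  revert hg hd hp
  cases h (Fm.var (base δ)) <;> cases hpγ : par γ <;> cases hpδ : par δ <;> simp

lemma fig_isFilter {A : Type*} (neg : A → A) (S : Set A) : IsSNFilter neg (Fig neg S) := by
  intro Γ α hd h hh hs F hF hSF
  exact hF Γ α hd h hh (fun γ hγ => hs γ hγ F hF hSF)

lemma subset_fig {A : Type*} (neg : A → A) (S : Set A) : S ⊆ Fig neg S :=
  fun _ hx _ _ hS => hS hx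

end StmtAux

open StmtAux in
/-- (B6) If a ∈ Fig(B) and Fig(B) ≠ A, then there is b ∈ B with a ∈ Fig({b}). -/
theorem stmt14 {A : Type*} (neg : A → A) (B : Set A) (a : A)
    (ha : a ∈ Fig neg B) (hne : Fig neg B ≠ Set.univ) :
    ∃ b ∈ B, a ∈ Fig neg {b} := by
  classical
  set F : Set A := ⋃ b ∈ B, Fig neg {b} with hFdef
  have hsub : F ⊆ Fig neg B := by
    intro x hx
    simp only [hFdef, Set.mem_iUnion] at hx
    obtain ⟨b, hb, hxb⟩ := hx
    intro G hG hBG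
    exact hxb G hG (Set.singleton_subset_iff.mpr (hBG hb))
  have hFfilt : IsSNFilter neg F := by
    intro Γ α hd h hh hs
    rcases deriv_char hd with ⟨γ, hγ, δ, hδ, hb, hp⟩ | ⟨γ, hγ, hb, hp⟩
    · exfalso; apply hne
      apply Set.eq_univ_of_forall
      intro c
      have hγB : h γ ∈ Fig neg B := hsub (hs γ hγ)
      have hδB : h δ ∈ Fig neg B := hsub (hs δ hδ)
      set y : ℕ := base γ + 1 with hy
      set v : ℕ → A := fun n => if n = y then c else h (Fm.var n) with hv
      set h'' : Fm → A := evA neg v with hh''def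
      have hh'' : ∀ φ, h'' (Fm.neg φ) = neg (h'' φ) := fun φ => rfl
      have eγ : h'' γ = h γ := by
        apply hom_agree neg h'' h hh'' hh
        show v (base γ) = h (Fm.var (base γ))
        rw [hv]; simp only; rw [if_neg (by omega)]
      have eδ : h'' δ = h δ := by
        apply hom_agree neg h'' h hh'' hh
        show v (base δ) = h (Fm.var (base δ))
        rw [hv]; simp only; rw [if_neg (by rw [← hb]; omega)]
      have := fig_isFilter neg B {γ, δ} (Fm.var y) (deriv_clash hb hp (Fm.var y)) h'' hh''
        (by rintro φ (rfl | rfl)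
            · rw [eγ]; exact hγB
            · rw [eδ]; exact hδB)
      have hcy : h'' (Fm.var y) = c := by show v y = c; rw [hv]; simp
      rw [hcy] at this; exact this
    · have : h γ ∈ F := hs γ hγ
      simp only [hFdef, Set.mem_iUnion] at this ⊢
      obtain ⟨b, hbB, hγb⟩ := this
      refine ⟨b, hbB, ?_⟩
      exact fig_isFilter neg {b} {γ} α (deriv_single hb hp) h hh
        (by rintro φ rfl; exact hγb)
  have hBF : B ⊆ F := by
    intro b hb
    simp only [hFdef, Set.mem_iUnion]
    exact ⟨b, hb, subset_fig neg {b} rfl⟩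
  have haF : a ∈ F := ha F hFfilt hBF
  simp only [hFdef, Set.mem_iUnion] at haF
  obtain ⟨b, hb, hab⟩ := haF
  exact ⟨b, hb, hab⟩
end

section
/- Let ⟨A,C⟩ be a g-matrix with a unary operation ¬ such that C({a}) = C({¬¬a}) for all a ∈ A. Then the relation θ defined by (a,b) ∈ θ iff C({a}) = C({b}) and C({¬a}) = C({¬b}) is the Tarski congruence of ⟨A,C⟩: θ is a congruence of A such that (a,b) ∈ θ implies C({a}) = C({b}), and every congruence of A with that property is contained in θ. -/
/-- Let ⟨A, C⟩ be a g-matrix (C a closure operator: monotone, extensive,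
idempotent) with C({a}) = C({¬¬a}) for all a. Then the relation
θ a b ⟺ C({a}) = C({b}) ∧ C({¬a}) = C({¬b}) is the Tarski congruence of
⟨A, C⟩: it is a congruence such that θ a b implies C({a}) = C({b}), and every
congruence with that property is contained in it. -/
theorem stmt15 {A : Type*} (neg : A → A) (C : Set A → Set A)
    (hmono : ∀ X Y : Set A, X ⊆ Y → C X ⊆ C Y)
    (hext : ∀ X : Set A, X ⊆ C X)
    (hidem : ∀ X : Set A, C (C X) = C X)
    (hdn : ∀ a : A, C {a} = C {neg (neg a)}) :
    (Equivalence (fun a b : A => C {a} = C {b} ∧ C {neg a} = C {neg b})) ∧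
    (∀ a b : A, (C {a} = C {b} ∧ C {neg a} = C {neg b}) →
      (C {neg a} = C {neg b} ∧ C {neg (neg a)} = C {neg (neg b)})) ∧
    (∀ a b : A, (C {a} = C {b} ∧ C {neg a} = C {neg b}) → C {a} = C {b}) ∧
    (∀ θ : A → A → Prop, Equivalence θ → (∀ a b : A, θ a b → θ (neg a) (neg b)) →
      (∀ a b : A, θ a b → C {a} = C {b}) →
      ∀ a b : A, θ a b → (C {a} = C {b} ∧ C {neg a} = C {neg b})) := by
  refine ⟨⟨fun a => ⟨rfl, rfl⟩, fun h => ⟨h.1.symm, h.2.symm⟩,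
    fun h h' => ⟨h.1.trans h'.1, h.2.trans h'.2⟩⟩, ?_, ?_, ?_⟩
  · intro a b h
    exact ⟨h.2, (hdn a).symm.trans (h.1.trans (hdn b))⟩
  · intro a b h; exact h.1
  · intro θ _ hcong hC a b hab
    exact ⟨hC a b hab, hC _ _ (hcong a b hab)⟩
end

section
/- Let ⟨A,C⟩ be a g-matrix with a unary operation ¬ satisfying: (F5) for all a, b ∈ A, if a ∈ C({b}) and C({b}) ≠ A then ¬b ∈ C({¬a}); and (F7) for every B ⊆ A, if C(B) = A then there exist b, b' ∈ B with C({b}) = C({¬b'}). Then the Frege relation Λ, defined by (a,b) ∈ Λ iff C({a}) = C({b}), is a congruence of A (i.e., C({a}) = C({b}) implies C({¬a}) = C({¬b})). -/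
/-- Let ⟨A, C⟩ be a g-matrix (C a closure operator: monotone, extensive,
idempotent) satisfying (F5): a ∈ C({b}) and C({b}) ≠ A imply ¬b ∈ C({¬a}),
and (F7): C(B) = A implies there are b, b' ∈ B with C({b}) = C({¬b'}).
Then the Frege relation (a,b) ↦ C({a}) = C({b}) is a congruence, i.e.
C({a}) = C({b}) implies C({¬a}) = C({¬b}). -/
theorem stmt16 {A : Type*} (neg : A → A) (C : Set A → Set A)
    (hmono : ∀ X Y : Set A, X ⊆ Y → C X ⊆ C Y)
    (hext : ∀ X : Set A, X ⊆ C X)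
    (hidem : ∀ X : Set A, C (C X) = C X)
    (hF5 : ∀ a b : A, a ∈ C {b} → C {b} ≠ Set.univ → neg b ∈ C {neg a})
    (hF7 : ∀ B : Set A, C B = Set.univ → ∃ b ∈ B, ∃ b' ∈ B, C {b} = C {neg b'}) :
    ∀ a b : A, C {a} = C {b} → C {neg a} = C {neg b} := by
  intro a b hab
  have hsub : ∀ x y : A, x ∈ C {y} → C {x} ⊆ C {y} := by
    intro x y hx
    have : ({x} : Set A) ⊆ C {y} := by simpa using hx
    calc C {x} ⊆ C (C {y}) := hmono _ _ this
      _ = C {y} := hidem _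
  by_cases hU : C {a} = Set.univ
  · -- both are univ, use F7
    have key : ∀ c : A, C {c} = Set.univ → C {neg c} = Set.univ := by
      intro c hc
      obtain ⟨x, hx, y, hy, hxy⟩ := hF7 {c} hc
      simp only [Set.mem_singleton_iff] at hx hy
      subst hx; subst hy
      rw [← hxy, hc]
    rw [key a hU, key b (hab ▸ hU)]
  · have hbU : C {b} ≠ Set.univ := hab ▸ hU
    have h1 : neg b ∈ C {neg a} := hF5 a b (hab ▸ hext {a} rfl) hbU
    have h2 : neg a ∈ C {neg b} := hF5 b a (hab ▸ hext {b} rfl) hU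
    exact Set.Subset.antisymm (hsub _ _ h2) (hsub _ _ h1)
end

section
/- Let A be an algebra with a unary operation ¬ satisfying ¬¬a = a for all a ∈ A. For every B ⊆ A, if Fig(B) ≠ A then Fig(B) = B. -/
/-- The variable at the core of a formula. -/
def Fm.core : Fm → ℕ
  | .var n => n
  | .neg φ => Fm.core φ

/-- The parity of negations of a formula. -/
def Fm.par : Fm → Bool
  | .var _ => false
  | .neg φ => !(Fm.par φ)

lemma hom_core_par {A : Type*} (neg : A → A) (hinv : ∀ a : A, neg (neg a) = a)
    (h : Fm → A) (hh : ∀ φ : Fm, h (Fm.neg φ) = neg (h φ)) :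
    ∀ φ : Fm, h φ = cond (Fm.par φ) (neg (h (Fm.var (Fm.core φ)))) (h (Fm.var (Fm.core φ))) := by
  intro φ
  induction φ with
  | var n => simp [Fm.par, Fm.core]
  | neg ψ ih =>
      rw [hh, ih]
      cases hp : Fm.par ψ <;> simp [Fm.par, Fm.core, hp, hinv]

lemma derivN_cases (Γ : Set Fm) (α : Fm) (hd : DerivN Γ α) :
    (∃ γ ∈ Γ, Fm.core γ = Fm.core α ∧ Fm.par γ = Fm.par α) ∨
    (∃ γ ∈ Γ, ∃ γ' ∈ Γ, Fm.core γ = Fm.core γ' ∧ Fm.par γ = !(Fm.par γ')) := by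
  by_contra hc
  push_neg at hc
  obtain ⟨h1, h2⟩ := hc
  classical
  set v : ℕ → Bool := fun n =>
    if hx : ∃ γ, γ ∈ Γ ∧ Fm.core γ = n then !(Fm.par hx.choose)
    else (if n = Fm.core α then Fm.par α else true) with hv
  set h : Fm → Bool := fun φ => xor (v (Fm.core φ)) (Fm.par φ) with hhdef
  have hhom : ∀ φ : Fm, h (Fm.neg φ) = !(h φ) := by
    intro φ
    simp only [hhdef, Fm.core, Fm.par]
    cases v (Fm.core φ) <;> cases Fm.par φ <;> rfl
  have htrue : ∀ γ ∈ Γ, h γ = true := by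
    intro γ hγ
    have hx : ∃ γ', γ' ∈ Γ ∧ Fm.core γ' = Fm.core γ := ⟨γ, hγ, rfl⟩
    have hspec := hx.choose_spec
    have hpar : Fm.par hx.choose = Fm.par γ := by
      have := h2 hx.choose hspec.1 γ hγ hspec.2
      cases hg : Fm.par γ <;> cases hg' : Fm.par hx.choose <;> simp_all
    simp only [hhdef, hv, dif_pos hx, hpar]
    cases Fm.par γ <;> rfl
  have := hd h hhom htrue
  simp only [hhdef, hv] at this
  by_cases hx : ∃ γ, γ ∈ Γ ∧ Fm.core γ = Fm.core α
  · have hspec := hx.choose_spec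
    have hpar : Fm.par hx.choose ≠ Fm.par α := h1 hx.choose hspec.1 hspec.2
    rw [dif_pos hx] at this
    cases hg : Fm.par α <;> cases hg' : Fm.par hx.choose <;> simp_all
  · rw [dif_neg hx] at this
    cases Fm.par α <;> simp_all

/-- Homomorphic extension of a variable assignment. -/
def extHom {A : Type*} (neg : A → A) (v : ℕ → A) : Fm → A
  | .var n => v n
  | .neg φ => neg (extHom neg v φ)

lemma derivN_contra (α : Fm) : DerivN {Fm.var 0, Fm.neg (Fm.var 0)} α := by
  intro h hhom hΓ
  have h1 : h (Fm.var 0) = true := hΓ _ (Or.inl rfl)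
  have h2 : h (Fm.neg (Fm.var 0)) = true := hΓ _ (Or.inr rfl)
  rw [hhom, h1] at h2
  simp at h2

/-- If the algebra satisfies ¬¬a = a, then every proper generated S_N-filter
Fig(B) ≠ A equals B itself. -/
theorem stmt17 {A : Type*} (neg : A → A) (hinv : ∀ a : A, neg (neg a) = a)
    (B : Set A) (hne : Fig neg B ≠ Set.univ) : Fig neg B = B := by
  have hBsub : B ⊆ Fig neg B := fun b hb F _ hBF => hBF hb
  have hBfilter : IsSNFilter neg B := by
    intro Γ α hd h hhom hΓ
    rcases derivN_cases Γ α hd with ⟨γ, hγ, hcore, hpar⟩ | ⟨γ, hγ, γ', hγ', hcore, hpar⟩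
    · have hα := hom_core_par neg hinv h hhom α
      have hγeq := hom_core_par neg hinv h hhom γ
      rw [hcore, hpar] at hγeq
      rw [hα, ← hγeq]
      exact hΓ γ hγ
    · -- B contains b and neg b; then Fig neg B = univ, contradiction
      exfalso
      apply hne
      have hb : h γ' ∈ B := hΓ γ' hγ'
      have hnb : neg (h γ') ∈ B := by
        have hγeq := hom_core_par neg hinv h hhom γ
        have hγ'eq := hom_core_par neg hinv h hhom γ'
        rw [hcore, hpar] at hγeq
        have : h γ = cond (Fm.par γ') (h (Fm.var (Fm.core γ'))) (neg (h (Fm.var (Fm.core γ')))) := by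
          rw [hγeq]; cases Fm.par γ' <;> rfl
        have hγnb : h γ = neg (h γ') := by
          rw [this, hγ'eq]
          cases Fm.par γ' <;> simp [hinv]
        rw [← hγnb]; exact hΓ γ hγ
      ext a
      simp only [Set.mem_univ, iff_true]
      intro F hF hBF
      have hh' : ∀ φ : Fm, extHom neg (fun n => if n = 0 then h γ' else a) (Fm.neg φ)
          = neg (extHom neg (fun n => if n = 0 then h γ' else a) φ) := fun φ => rfl
      have := hF {Fm.var 0, Fm.neg (Fm.var 0)} (Fm.var 1) (derivN_contra _)
        (extHom neg (fun n => if n = 0 then h γ' else a)) hh' ?_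
      · simpa [extHom] using this
      · rintro γ'' (rfl | rfl)
        · simpa [extHom] using hBF hb
        · simpa [extHom] using hBF hnb
  apply Set.Subset.antisymm _ hBsub
  intro a ha
  exact ha B hBfilter (fun b hb => hb)
end
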